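/- Comparison property: if S is a left shelf generated by a single element, then for all a, b ∈ S at least one of a ⊏* b, a = b, b ⊏* a holds. -/

import Mathlib

/-- The sub-shelf of a left shelf generated by `g`: the smallest subset
containing `g` and closed under the operation, as an inductive predicate. -/
inductive ShelfClosure {S : Type*} [Shelf S] (g : S) : S → Prop
  | base : ShelfClosure g g
  | act {a b : S} : ShelfClosure g a → ShelfClosure g b → ShelfClosure g (Shelf.act a b)

/-- The division relation of a left shelf: `a ⊏ b` iff `a ◃ x = b` for some `x`. -/
def ShelfDiv {S : Type*} [Shelf S] (a b : S) : Prop :=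
  ∃ x : S, Shelf.act a x = b

namespace ShelfCmp

/-- Terms over one generator. -/
inductive T where
  | x : T
  | op : T → T → T

namespace T

/-- One-step LD-expansion. -/
inductive Stp : T → T → Prop
  | root (a b c : T) : Stp (op a (op b c)) (op (op a b) (op a c))
  | left {a a' : T} (b : T) : Stp a a' → Stp (op a b) (op a' b)
  | right (a : T) {b b' : T} : Stp b b' → Stp (op a b) (op a b')

abbrev Stps := Relation.ReflTransGen Stp

theorem Stps.opl {a a' : T} (b : T) (h : Stps a a') : Stps (op a b) (op a' b) :=
  Relation.ReflTransGen.lift (fun t => op t b) (fun _ _ hh => Stp.left b hh) _ _ h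

theorem Stps.opr (a : T) {b b' : T} (h : Stps b b') : Stps (op a b) (op a b') :=
  Relation.ReflTransGen.lift (fun t => op a t) (fun _ _ hh => Stp.right a hh) _ _ h

theorem Stps.cong {a a' b b' : T} (h1 : Stps a a') (h2 : Stps b b') :
    Stps (op a b) (op a' b') :=
  (Stps.opl b h1).trans (Stps.opr a' h2)

/-- Full distribution of `a` over `b`. -/
def dot (a : T) : T → T
  | x => op a x
  | op u v => op (dot a u) (dot a v)

/-- Full development. -/
def d : T → T
  | x => x
  | op u v => dot (d u) (d v)

theorem stps_dot (a b : T) : Stps (op a b) (dot a b) := by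
  induction b generalizing a with
  | x => exact Relation.ReflTransGen.refl
  | op u v ihu ihv =>
    exact Relation.ReflTransGen.head (Stp.root a u v) (Stps.cong (ihu a) (ihv a))

theorem dot_monoR {a : T} {b b' : T} (h : Stp b b') : Stp (dot a b) (dot a b') := by
  induction h with
  | root u v w => exact Stp.root (dot a u) (dot a v) (dot a w)
  | left c h ih => exact Stp.left _ ih
  | right c h ih => exact Stp.right _ ih

theorem dot_monoR' {a b b' : T} (h : Stps b b') : Stps (dot a b) (dot a b') :=
  Relation.ReflTransGen.lift (dot a) (fun _ _ hh => dot_monoR hh) _ _ h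

theorem dot_monoL {a a' : T} (h : Stps a a') (b : T) : Stps (dot a b) (dot a' b) := by
  induction b with
  | x => exact Stps.opl _ h
  | op u v ihu ihv => exact Stps.cong ihu ihv

theorem stps_d (t : T) : Stps t (d t) := by
  induction t with
  | x => exact Relation.ReflTransGen.refl
  | op u v ihu ihv => exact (Stps.cong ihu ihv).trans (stps_dot _ _)

theorem dot_dot (p q r : T) : Stps (dot p (dot q r)) (dot (dot p q) (dot p r)) := by
  induction r with
  | x =>
    -- dot p (op q x) = op (dot p q) (op p x) ⇒ op (op (dot p q) p) (op (dot p q) x)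
    --   ⇒* op (dot (dot p q) p) (op (dot p q) x) = dot (dot p q) (op p x)
    exact Relation.ReflTransGen.head (Stp.root (dot p q) p x)
      (Stps.opl _ (stps_dot (dot p q) p))
  | op u v ihu ihv => exact Stps.cong ihu ihv

theorem z1 {t u : T} (h : Stp t u) : Stps u (d t) := by
  induction h with
  | root a b c =>
    -- u = op (op a b) (op a c), d t = dot (d a) (dot (d b) (d c))
    have h1 : Stps (op (op a b) (op a c)) (op (dot (d a) (d b)) (dot (d a) (d c))) :=
      Stps.cong ((Stps.cong (stps_d a) (stps_d b)).trans (stps_dot _ _))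
        ((Stps.cong (stps_d a) (stps_d c)).trans (stps_dot _ _))
    have h2 : Stps (dot (d a) (op (d b) (d c))) (dot (d a) (dot (d b) (d c))) :=
      dot_monoR' (stps_dot _ _)
    exact h1.trans h2
  | left b h ih =>
    exact (Stps.cong ih (stps_d _)).trans (stps_dot _ _)
  | right a h ih =>
    exact (Stps.cong (stps_d _) ih).trans (stps_dot _ _)

theorem z2 {t u : T} (h : Stp t u) : Stps (d t) (d u) := by
  induction h with
  | root a b c => exact dot_dot (d a) (d b) (d c)
  | left b h ih => exact dot_monoL ih _
  | right a h ih => exact dot_monoR' ih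

theorem d_mono {t u : T} (h : Stps t u) : Stps (d t) (d u) := by
  induction h with
  | refl => exact Relation.ReflTransGen.refl
  | tail _ h2 ih => exact ih.trans (z2 h2)

/-- Iterated development. -/
def dIter : ℕ → T → T
  | 0, t => t
  | n + 1, t => d (dIter n t)

theorem dIter_le {n m : ℕ} (h : n ≤ m) (t : T) : Stps (dIter n t) (dIter m t) := by
  induction m with
  | zero =>
    obtain rfl : n = 0 := Nat.le_zero.mp h
    exact Relation.ReflTransGen.refl
  | succ m ih =>
    rcases Nat.lt_or_ge n (m + 1) with h' | h'
    · exact (ih (Nat.lt_succ_iff.mp h')).trans (stps_d (dIter m t))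
    · obtain rfl : n = m + 1 := le_antisymm h h'
      exact Relation.ReflTransGen.refl

theorem ub {t v : T} (h : Stps t v) : ∃ n, Stps v (dIter n t) := by
  induction h with
  | refl => exact ⟨0, Relation.ReflTransGen.refl⟩
  | tail _ h2 ih =>
    obtain ⟨n, hn⟩ := ih
    exact ⟨n + 1, (z1 h2).trans (d_mono hn)⟩

theorem confluence {t u v : T} (h1 : Stps t u) (h2 : Stps t v) :
    ∃ w, Stps u w ∧ Stps v w := by
  obtain ⟨n, hn⟩ := ub h1
  obtain ⟨m, hm⟩ := ub h2
  exact ⟨dIter (max n m) t, hn.trans (dIter_le (le_max_left n m) t),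
    hm.trans (dIter_le (le_max_right n m) t)⟩

/-- LD-equivalence as joinability. -/
def LD (s t : T) : Prop := ∃ w, Stps s w ∧ Stps t w

theorem LD.refl (t : T) : LD t t := ⟨t, Relation.ReflTransGen.refl, Relation.ReflTransGen.refl⟩

theorem LD.symm {s t : T} (h : LD s t) : LD t s := ⟨h.choose, h.choose_spec.2, h.choose_spec.1⟩

theorem LD.trans {s t u : T} (h1 : LD s t) (h2 : LD t u) : LD s u := by
  obtain ⟨w1, hs, ht⟩ := h1
  obtain ⟨w2, ht', hu⟩ := h2
  obtain ⟨w3, hw1, hw2⟩ := confluence ht ht'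
  exact ⟨w3, hs.trans hw1, hu.trans hw2⟩

theorem LD.ofStp {s t : T} (h : Stp s t) : LD s t :=
  ⟨t, Relation.ReflTransGen.single h, Relation.ReflTransGen.refl⟩

theorem LD.ofStps {s t : T} (h : Stps s t) : LD s t := ⟨t, h, Relation.ReflTransGen.refl⟩

theorem LD.cong {a a' b b' : T} (h1 : LD a a') (h2 : LD b b') : LD (op a b) (op a' b') := by
  obtain ⟨w1, ha, ha'⟩ := h1
  obtain ⟨w2, hb, hb'⟩ := h2
  exact ⟨op w1 w2, Stps.cong ha hb, Stps.cong ha' hb'⟩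

/-- Right powers: `P n` is `x^[n+1]`. -/
def P : ℕ → T
  | 0 => x
  | n + 1 => op x (P n)

/-- Size = number of leaves. -/
def sz : T → ℕ
  | x => 1
  | op a b => sz a + sz b

theorem sz_pos (t : T) : 1 ≤ sz t := by
  cases t with
  | x => exact le_refl 1
  | op a b => have := sz_pos a; have := sz_pos b; simp [sz]; omega

theorem sz_P (n : ℕ) : sz (P n) = n + 1 := by
  induction n with
  | zero => rfl
  | succ n ih => simp [P, sz, ih]; omega

/-- Absorption: `t ◃ x^[n] =LD x^[n+1]` whenever `sz t ≤ n + 1`. -/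
theorem abs : ∀ (t : T) (n : ℕ), sz t ≤ n + 1 → LD (op t (P n)) (P (n + 1)) := by
  intro t
  induction t with
  | x => intro n _; exact LD.refl _
  | op u v ihu ihv =>
    intro n hn
    have hu1 := sz_pos u
    have hv1 := sz_pos v
    simp only [sz] at hn
    obtain ⟨k, rfl⟩ : ∃ k, n = k + 1 := ⟨n - 1, by omega⟩
    have hu : sz u ≤ k + 1 := by omega
    have hv : sz v ≤ k + 1 := by omega
    -- op (op u v) (P (k+1)) =LD op (op u v) (op u (P k))  [ihu k]
    have s1 : LD (op (op u v) (P (k + 1))) (op (op u v) (op u (P k))) :=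
      LD.cong (LD.refl _) (ihu k hu).symm
    -- =LD op u (op v (P k))  [root, reversed]
    have s2 : LD (op (op u v) (op u (P k))) (op u (op v (P k))) :=
      (LD.ofStp (Stp.root u v (P k))).symm
    -- =LD op u (P (k+1))  [ihv k]
    have s3 : LD (op u (op v (P k))) (op u (P (k + 1))) :=
      LD.cong (LD.refl _) (ihv k hv)
    -- =LD P (k+2)  [ihu (k+1)]
    have s4 : LD (op u (P (k + 1))) (P (k + 2)) := ihu (k + 1) (by omega)
    exact ((s1.trans s2).trans s3).trans s4

/-- Iterated left subterm. -/
inductive IsIL : T → T → Prop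
  | base (t : T) : IsIL t t
  | cons {s a : T} (b : T) : IsIL s a → IsIL s (op a b)

theorem IsIL.linear {p q t : T} (h1 : IsIL p t) (h2 : IsIL q t) : IsIL p q ∨ IsIL q p := by
  induction h1 with
  | base => exact Or.inr h2
  | cons b h ih =>
    cases h2 with
    | base => exact Or.inl (IsIL.cons _ h)
    | cons b h2' => exact ih h2'

/-- Iterated left subterms can be traced through one expansion step. -/
theorem il_step {t t' s : T} (h : Stp t t') (hs : IsIL s t) :
    ∃ s', Stps s s' ∧ IsIL s' t' := by
  induction h generalizing s with
  | root a b c =>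
    cases hs with
    | base => exact ⟨_, Relation.ReflTransGen.single (Stp.root a b c), IsIL.base _⟩
    | cons _ h' =>
      cases h' with
      | base => exact ⟨a, Relation.ReflTransGen.refl, IsIL.cons _ (IsIL.cons _ (IsIL.base a))⟩
      | cons _ h'' =>
        exact ⟨s, Relation.ReflTransGen.refl, IsIL.cons _ (IsIL.cons _ (IsIL.cons _ h''))⟩
  | @left a a' b h ih =>
    cases hs with
    | base => exact ⟨op a' b, Relation.ReflTransGen.single (Stp.left b h), IsIL.base _⟩
    | cons _ h' =>
      obtain ⟨s', hs', hil⟩ := ih h'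
      exact ⟨s', hs', IsIL.cons _ hil⟩
  | @right a b b' h ih =>
    cases hs with
    | base => exact ⟨op a b', Relation.ReflTransGen.single (Stp.right a h), IsIL.base _⟩
    | cons _ h' => exact ⟨s, Relation.ReflTransGen.refl, IsIL.cons _ h'⟩

theorem il_steps {t t' s : T} (h : Stps t t') (hs : IsIL s t) :
    ∃ s', Stps s s' ∧ IsIL s' t' := by
  induction h with
  | refl => exact ⟨s, Relation.ReflTransGen.refl, hs⟩
  | tail _ h2 ih =>
    obtain ⟨s1, hs1, hil1⟩ := ih
    obtain ⟨s2, hs2, hil2⟩ := il_step h2 hil1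
    exact ⟨s2, hs1.trans hs2, hil2⟩

section Eval

variable {S : Type*} [Shelf S] (g : S)

/-- Evaluation of a term in the shelf. -/
def ev : T → S
  | x => g
  | op a b => Shelf.act (ev a) (ev b)

theorem ev_stp {t t' : T} (h : Stp t t') : ev g t = ev g t' := by
  induction h with
  | root a b c => exact Shelf.self_distrib
  | left b h ih => simp [ev, ih]
  | right a h ih => simp [ev, ih]

theorem ev_stps {t t' : T} (h : Stps t t') : ev g t = ev g t' := by
  induction h with
  | refl => rfl
  | tail _ h2 ih => exact ih.trans (ev_stp g h2)

theorem ev_surj (hgen : ∀ a : S, ShelfClosure g a) (a : S) : ∃ t, ev g t = a := by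
  induction hgen a with
  | base => exact ⟨x, rfl⟩
  | act _ _ ih1 ih2 =>
    obtain ⟨t1, rfl⟩ := ih1
    obtain ⟨t2, rfl⟩ := ih2
    exact ⟨op t1 t2, rfl⟩

theorem ev_il {s t : T} (h : IsIL s t) :
    s = t ∨ Relation.TransGen ShelfDiv (ev g s) (ev g t) := by
  induction h with
  | base => exact Or.inl rfl
  | @cons a b hh ih =>
    right
    have hdiv : ShelfDiv (ev g a) (ev g (op a b)) := ⟨ev g b, rfl⟩
    cases ih with
    | inl heq => rw [heq]; exact Relation.TransGen.single hdiv
    | inr htg => exact htg.tail hdiv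

/-- Chain of powers above any term, keeping the term as iterated left subterm. -/
theorem chain (t2 : T) : ∀ j : ℕ, ∃ B, IsIL t2 B ∧ LD B (P (sz t2 + j)) := by
  intro j
  induction j with
  | zero =>
    refine ⟨op t2 (P (sz t2 - 1)), IsIL.cons _ (IsIL.base t2), ?_⟩
    have h1 := sz_pos t2
    have := abs t2 (sz t2 - 1) (by omega)
    have he : sz t2 - 1 + 1 = sz t2 + 0 := by omega
    rwa [he] at this
  | succ j ih =>
    obtain ⟨B, hil, hld⟩ := ih
    refine ⟨op B (P (sz t2 + j)), IsIL.cons _ hil, ?_⟩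
    have h1 : LD (op B (P (sz t2 + j))) (op (P (sz t2 + j)) (P (sz t2 + j))) :=
      LD.cong hld (LD.refl _)
    have h2 : LD (op (P (sz t2 + j)) (P (sz t2 + j))) (P (sz t2 + j + 1)) :=
      abs (P (sz t2 + j)) (sz t2 + j) (by rw [sz_P])
    exact h1.trans h2

/-- Main auxiliary comparison for terms, assuming a size inequality. -/
theorem aux (t1 t2 : T) (h : sz t2 ≤ sz t1) :
    Relation.TransGen ShelfDiv (ev g t1) (ev g t2) ∨ ev g t1 = ev g t2 ∨
      Relation.TransGen ShelfDiv (ev g t2) (ev g t1) := by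
  -- A := op t1 (P (sz t1)) has class P (sz t1 + 1)
  have hA : LD (op t1 (P (sz t1))) (P (sz t1 + 1)) := abs t1 (sz t1) (by omega)
  obtain ⟨B, hilB, hB⟩ := chain t2 (sz t1 + 1 - sz t2)
  have heq : sz t2 + (sz t1 + 1 - sz t2) = sz t1 + 1 := by omega
  rw [heq] at hB
  have hAB : LD (op t1 (P (sz t1))) B := hA.trans hB.symm
  obtain ⟨W, hAW, hBW⟩ := hAB
  obtain ⟨t1', h1s, h1il⟩ := il_steps hAW (IsIL.cons _ (IsIL.base t1))
  obtain ⟨t2', h2s, h2il⟩ := il_steps hBW hilB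
  have e1 : ev g t1 = ev g t1' := ev_stps g h1s
  have e2 : ev g t2 = ev g t2' := ev_stps g h2s
  rcases IsIL.linear h1il h2il with h | h
  · rcases ev_il g h with heq' | htg
    · right; left; rw [e1, e2, heq']
    · left; rw [e1, e2]; exact htg
  · rcases ev_il g h with heq' | htg
    · right; left; rw [e1, e2, heq']
    · right; right; rw [e1, e2]; exact htg

end Eval

end T

end ShelfCmp

/-- comparison property: if `S` is a left shelf generated by a single
element, then for all `a, b ∈ S` at least one of `a ⊏* b`, `a = b`, `b ⊏* a` holds,
where `⊏*` is the transitive closure of the division relation. -/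
theorem shelf_comparison {S : Type*} [Shelf S] (g : S)
    (hgen : ∀ a : S, ShelfClosure g a) (a b : S) :
    Relation.TransGen ShelfDiv a b ∨ a = b ∨ Relation.TransGen ShelfDiv b a := by
  obtain ⟨t1, rfl⟩ := ShelfCmp.T.ev_surj g hgen a
  obtain ⟨t2, rfl⟩ := ShelfCmp.T.ev_surj g hgen b
  rcases le_total (ShelfCmp.T.sz t2) (ShelfCmp.T.sz t1) with h | h
  · exact ShelfCmp.T.aux g t1 t2 h
  · rcases ShelfCmp.T.aux g t2 t1 h with h' | h' | h'
    · exact Or.inr (Or.inr h')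
    · exact Or.inr (Or.inl h'.symm)
    · exact Or.inl h'
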